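/- (The maximum follows a proportional reversed hazards model.) For the DPRH model, for every y ∈ (a,b), the CDF of Y = max{Y₁,Y₂} equals F(y,y) = ∫_a^{y} ∫_a^{y} f(u,v) dv du = F₀(y)^{θ₁+θ₂}; that is, max{Y₁,Y₂} has a PRH distribution with baseline F₀ and proportionality parameter θ₁+θ₂. -/

import Mathlib

open MeasureTheory Set Filter

noncomputable def dprh (a b : ℝ) (F₀ f₀ : ℝ → ℝ) (θ₁ θ₂ θ₁' θ₂' : ℝ) (y₁ y₂ : ℝ) : ℝ :=
  if a < y₁ ∧ y₁ < y₂ ∧ y₂ < b then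
    θ₁' * θ₂ * f₀ y₁ * f₀ y₂ * F₀ y₁ ^ (θ₁' - 1) * F₀ y₂ ^ (θ₁ + θ₂ - θ₁' - 1)
  else if a < y₂ ∧ y₂ < y₁ ∧ y₁ < b then
    θ₁ * θ₂' * f₀ y₁ * f₀ y₂ * F₀ y₁ ^ (θ₁ + θ₂ - θ₂' - 1) * F₀ y₂ ^ (θ₂' - 1)
  else 0

section FTCopen
lemma ftc_open {H h : ℝ → ℝ} {α β L : ℝ} (hαβ : α < β)
    (hd : ∀ x ∈ Ioc α β, HasDerivAt H (h x) x)
    (hcont : ContinuousOn h (Ioc α β))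
    (hpos : ∀ x ∈ Ioc α β, 0 ≤ h x)
    (hlim : Filter.Tendsto H (nhdsWithin α (Ioi α)) (nhds L)) :
    IntegrableOn h (Ioc α β) ∧ ∫ x in Ioc α β, h x = H β - L := by
  have ftcsub : ∀ s t : ℝ, α < s → s ≤ t → t ≤ β → ∫ x in s..t, h x = H t - H s := by
    intro s t hs hst htβ
    have hsub : uIcc s t ⊆ Ioc α β := by
      rw [uIcc_of_le hst]
      exact fun x hx => ⟨lt_of_lt_of_le hs hx.1, le_trans hx.2 htβ⟩
    refine intervalIntegral.integral_eq_sub_of_hasDerivAt (fun x hx => hd x (hsub hx)) ?_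
    exact (hcont.mono hsub).intervalIntegrable
  have intsub : ∀ s, α < s → IntegrableOn h (Ioc s β) := by
    intro s hs
    rcases le_or_gt s β with hsβ | hsβ
    · have hsub : Icc s β ⊆ Ioc α β := fun x hx => ⟨lt_of_lt_of_le hs hx.1, hx.2⟩
      exact ((hcont.mono hsub).integrableOn_Icc).mono_set Ioc_subset_Icc_self
    · simp [Ioc_eq_empty (not_lt.mpr hsβ.le)]
  have hLle : ∀ s ∈ Ioc α β, L ≤ H s := by
    intro s hs
    refine le_of_tendsto hlim ?_
    filter_upwards [Ioo_mem_nhdsGT_of_mem ⟨le_refl α, hs.1⟩] with t ht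
    have heq : ∫ x in t..s, h x = H s - H t := ftcsub t s ht.1 ht.2.le hs.2
    have hnn : 0 ≤ ∫ x in t..s, h x := by
      apply intervalIntegral.integral_nonneg ht.2.le
      intro x hx
      exact hpos x ⟨lt_of_lt_of_le ht.1 hx.1, le_trans hx.2 hs.2⟩
    linarith [heq ▸ hnn]
  set l : Filter ℝ := nhdsWithin α (Ioo α β) with hl
  have hlne : l.NeBot := by
    rw [hl, ← mem_closure_iff_nhdsWithin_neBot, closure_Ioo hαβ.ne]
    exact ⟨le_refl α, hαβ.le⟩
  have hmem : Ioo α β ∈ l := self_mem_nhdsWithin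
  set A : ℝ → ℝ := fun s => if s ∈ Ioo α β then s else (α + β) / 2 with hA
  have hAmem : ∀ s, A s ∈ Ioo α β := by
    intro s; rw [hA]; dsimp only
    split
    · assumption
    · constructor <;> [linarith; linarith]
  have hAtendsto : Filter.Tendsto A l (nhds α) := by
    have : Filter.Tendsto id l (nhds α) := tendsto_id.mono_left nhdsWithin_le_nhds
    refine this.congr' ?_
    filter_upwards [hmem] with s hs
    rw [hA]; simp [hs]
  have hval : ∀ s, ∫ x in Ioc (A s) β, h x = H β - H (A s) := by
    intro s
    rw [← intervalIntegral.integral_of_le (hAmem s).2.le]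
    exact ftcsub _ _ (hAmem s).1 (hAmem s).2.le le_rfl
  have hnorm : ∀ s, ∫ x in Ioc (A s) β, ‖h x‖ = H β - H (A s) := by
    intro s
    rw [← hval s]
    refine setIntegral_congr_fun measurableSet_Ioc fun x hx => ?_
    exact Real.norm_of_nonneg (hpos x ⟨lt_trans (hAmem s).1 hx.1, hx.2⟩)
  have hint : IntegrableOn h (Ioc α β) := by
    refine integrableOn_Ioc_of_intervalIntegral_norm_bounded_left (I := H β - L)
      (a := A) (l := l) (fun s => intsub (A s) (hAmem s).1) hAtendsto ?_
    filter_upwards with s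
    rw [hnorm s]
    have := hLle (A s) ⟨(hAmem s).1, (hAmem s).2.le⟩
    linarith
  refine ⟨hint, ?_⟩
  have cover : AECover (volume.restrict (Ioc α β)) l (fun s => Ioi (A s)) := by
    have : AECover (volume.restrict (Ioi α)) l (fun s => Ioi (A s)) :=
      aecover_Ioi_of_Ioi hAtendsto
    exact this.mono (Measure.restrict_mono Ioc_subset_Ioi_self le_rfl)
  have t1 : Filter.Tendsto (fun s => ∫ x in Ioi (A s), h x ∂(volume.restrict (Ioc α β))) l
      (nhds (∫ x in Ioc α β, h x)) :=
    cover.integral_tendsto_of_countably_generated hint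
  have t2 : Filter.Tendsto (fun s => H β - H (A s)) l (nhds (H β - L)) := by
    refine Filter.Tendsto.const_sub _ ?_
    refine hlim.comp (tendsto_nhdsWithin_of_tendsto_nhds_of_eventually_within _ hAtendsto ?_)
    filter_upwards with s
    exact (hAmem s).1
  have heq : ∀ s, ∫ x in Ioi (A s), h x ∂(volume.restrict (Ioc α β)) = H β - H (A s) := by
    intro s
    rw [Measure.restrict_restrict measurableSet_Ioi]
    have hset : Ioi (A s) ∩ Ioc α β = Ioc (A s) β := by
      ext x
      constructor
      · rintro ⟨h1, _, h3⟩; exact ⟨h1, h3⟩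
      · rintro ⟨h1, h2⟩; exact ⟨h1, lt_trans (hAmem s).1 h1, h2⟩
    rw [hset, hval s]
  exact tendsto_nhds_unique (t1.congr (fun s => heq s)) t2
end FTCopen

noncomputable def Aad (c x : ℝ) : ℝ := if c = 0 then Real.log x else x ^ c / c

lemma hasDerivAt_Aad {c x : ℝ} (hx : 0 < x) : HasDerivAt (Aad c) (x ^ (c - 1)) x := by
  rcases eq_or_ne c 0 with rfl | hc
  · have hA : Aad 0 = Real.log := by funext z; simp [Aad]
    rw [hA]
    have := Real.hasDerivAt_log hx.ne'
    convert this using 1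
    rw [zero_sub, Real.rpow_neg_one]
  · have h1 : HasDerivAt (fun x : ℝ => x ^ c) (c * x ^ (c - 1)) x :=
      Real.hasDerivAt_rpow_const (Or.inl hx.ne')
    have h2 := h1.div_const c
    have hA : Aad c = fun x : ℝ => x ^ c / c := by funext z; simp [Aad, hc]
    rw [hA]
    convert h2 using 1
    · rfl
    · rfl
    field_simp

lemma continuousOn_Aad (c : ℝ) : ContinuousOn (Aad c) (Ioi 0) :=
  fun x hx => (hasDerivAt_Aad (c := c) hx).continuousAt.continuousWithinAt

lemma Aad_mono {c x y : ℝ} (hx : 0 < x) (hxy : x ≤ y) : Aad c x ≤ Aad c y := by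
  have hsm : StrictMonoOn (Aad c) (Ioi 0) := by
    refine strictMonoOn_of_deriv_pos (convex_Ioi 0) (continuousOn_Aad c) ?_
    intro z hz
    rw [interior_Ioi] at hz
    rw [(hasDerivAt_Aad hz).deriv]
    exact Real.rpow_pos_of_pos hz _
  rcases eq_or_lt_of_le hxy with rfl | h
  · exact le_rfl
  · exact (hsm hx (lt_of_lt_of_le hx hxy) h).le

noncomputable def Cad (c p x : ℝ) : ℝ :=
  if c = 0 then x ^ p / p * Real.log x - x ^ p / p ^ 2
  else x ^ (p + c) / (c * (p + c))

lemma hasDerivAt_Cad {c p x : ℝ} (hp : 0 < p) (hpc : 0 < p + c) (hx : 0 < x) :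
    HasDerivAt (Cad c p) (x ^ (p - 1) * Aad c x) x := by
  rcases eq_or_ne c 0 with rfl | hc
  · have h1 : HasDerivAt (fun x : ℝ => x ^ p) (p * x ^ (p - 1)) x :=
      Real.hasDerivAt_rpow_const (Or.inl hx.ne')
    have h2 : HasDerivAt Real.log x⁻¹ x := Real.hasDerivAt_log hx.ne'
    have h3 := ((h1.div_const p).mul h2).sub ((h1.div_const (p ^ 2)))
    have he : Cad 0 p = fun x : ℝ => x ^ p / p * Real.log x - x ^ p / p ^ 2 := by
      funext z; simp [Cad]
    rw [he]
    convert h3 using 1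
    · rfl
    · rfl
    · rfl
    have hxp : x ^ p = x ^ (p - 1) * x := by
      rw [← Real.rpow_add_one hx.ne']; ring_nf
    rw [Aad]
    simp only [if_pos rfl, ↓reduceIte]
    field_simp
    rw [hxp]
    ring
  · have h1 : HasDerivAt (fun x : ℝ => x ^ (p + c)) ((p + c) * x ^ (p + c - 1)) x :=
      Real.hasDerivAt_rpow_const (Or.inl hx.ne')
    have h2 := h1.div_const (c * (p + c))
    have he : Cad c p = fun x : ℝ => x ^ (p + c) / (c * (p + c)) := by
      funext z; simp [Cad, hc]
    rw [he]
    convert h2 using 1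
    · rfl
    · rfl
    rw [Aad]
    simp only [if_neg hc]
    have hsplit : x ^ (p + c - 1) = x ^ (p - 1) * x ^ c := by
      rw [← Real.rpow_add hx]; ring_nf
    rw [hsplit]
    field_simp

lemma tendsto_rpow_div_zero {p d : ℝ} (hp : 0 < p) :
    Filter.Tendsto (fun x : ℝ => x ^ p / d) (nhdsWithin 0 (Ioi 0)) (nhds 0) := by
  have h : Filter.Tendsto (fun x : ℝ => x ^ p) (nhdsWithin 0 (Ioi 0)) (nhds 0) := by
    have := (Real.continuousAt_rpow_const 0 p (Or.inr hp.le)).tendsto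
    rw [Real.zero_rpow hp.ne'] at this
    exact this.mono_left nhdsWithin_le_nhds
  simpa using h.div_const d

lemma tendsto_Aad_zero {p : ℝ} (hp : 0 < p) :
    Filter.Tendsto (Aad p) (nhdsWithin 0 (Ioi 0)) (nhds 0) := by
  have he : Aad p = fun x : ℝ => x ^ p / p := by funext z; simp [Aad, hp.ne']
  rw [he]
  exact tendsto_rpow_div_zero hp

lemma tendsto_Cad_zero {c p : ℝ} (hp : 0 < p) (hpc : 0 < p + c) :
    Filter.Tendsto (Cad c p) (nhdsWithin 0 (Ioi 0)) (nhds 0) := by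
  rcases eq_or_ne c 0 with rfl | hc
  · have he : Cad 0 p = fun x : ℝ => x ^ p / p * Real.log x - x ^ p / p ^ 2 := by
      funext z; simp [Cad]
    rw [he]
    have h1 : Filter.Tendsto (fun x : ℝ => x ^ p / p * Real.log x)
        (nhdsWithin 0 (Ioi 0)) (nhds 0) := by
      have := (tendsto_log_mul_rpow_nhdsGT_zero hp).div_const p
      simp only [zero_div] at this
      refine this.congr fun x => by ring
    have h2 := tendsto_rpow_div_zero (d := p ^ 2) hp
    simpa using h1.sub h2
  · have he : Cad c p = fun x : ℝ => x ^ (p + c) / (c * (p + c)) := by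
      funext z; simp [Cad, hc]
    rw [he]
    exact tendsto_rpow_div_zero hpc

lemma continuousOn_rpow_sub (q : ℝ) : ContinuousOn (fun x : ℝ => x ^ q) (Ioi 0) :=
  fun x hx => (Real.continuousAt_rpow_const x q (Or.inl (ne_of_gt hx))).continuousWithinAt

theorem dprh_max_prh
    (a b : ℝ) (hab : a < b) (F₀ f₀ : ℝ → ℝ)
    (hderiv : ∀ y ∈ Ioo a b, HasDerivAt F₀ (f₀ y) y)
    (hf₀cont : ContinuousOn f₀ (Ioo a b))
    (hmono : StrictMonoOn F₀ (Ioo a b))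
    (hf₀pos : ∀ y ∈ Ioo a b, 0 < f₀ y)
    (hF₀pos : ∀ y ∈ Ioo a b, 0 < F₀ y)
    (hF₀lt1 : ∀ y ∈ Ioo a b, F₀ y < 1)
    (hFa : Filter.Tendsto F₀ (nhdsWithin a (Ioi a)) (nhds 0))
    (hFb : Filter.Tendsto F₀ (nhdsWithin b (Iio b)) (nhds 1))
    (θ₁ θ₂ θ₁' θ₂' : ℝ) (hθ₁ : 0 < θ₁) (hθ₂ : 0 < θ₂) (hθ₁' : 0 < θ₁') (hθ₂' : 0 < θ₂')
    :
    ∀ y ∈ Ioo a b,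
      (∫ u in a..y, ∫ v in a..y, dprh a b F₀ f₀ θ₁ θ₂ θ₁' θ₂' u v) = F₀ y ^ (θ₁ + θ₂) := by
  intro y hy
  have hay : a < y := hy.1
  have hyb : y < b := hy.2
  set T : ℝ := F₀ y with hT
  set c : ℝ := θ₁ + θ₂ - θ₁' with hc
  have hS : (0:ℝ) < θ₁ + θ₂ := by linarith
  have hθc : 0 < θ₁' + c := by rw [hc]; linarith
  have hF₀cont : ContinuousOn F₀ (Ioo a b) :=
    fun u hu => (hderiv u hu).continuousAt.continuousWithinAt
  have hmonoLe : ∀ u v : ℝ, u ∈ Ioo a b → v ∈ Ioo a b → u ≤ v → F₀ u ≤ F₀ v :=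
    fun u v hu hv huv => hmono.monotoneOn hu hv huv
  have hFtend : Filter.Tendsto F₀ (nhdsWithin a (Ioi a)) (nhdsWithin 0 (Ioi 0)) := by
    rw [tendsto_nhdsWithin_iff]
    refine ⟨hFa, ?_⟩
    filter_upwards [Ioo_mem_nhdsGT_of_mem ⟨le_refl a, hab⟩] with u hu
    exact hF₀pos u hu
  -- master improper FTC lemma, composed with F₀
  have main : ∀ (G g : ℝ → ℝ) (β : ℝ), β ∈ Ioc a y →
      (∀ x : ℝ, 0 < x → HasDerivAt G (g x) x) →
      ContinuousOn g (Ioi 0) →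
      (∀ x : ℝ, 0 < x → x ≤ F₀ β → 0 ≤ g x) →
      Filter.Tendsto G (nhdsWithin 0 (Ioi 0)) (nhds 0) →
      IntegrableOn (fun u => g (F₀ u) * f₀ u) (Ioc a β) ∧
        ∫ u in Ioc a β, g (F₀ u) * f₀ u = G (F₀ β) := by
    intro G g β hβ hdG hgc hgpos hGlim
    have hβb : β < b := lt_of_le_of_lt hβ.2 hyb
    have hsub : Ioc a β ⊆ Ioo a b := fun x hx => ⟨hx.1, lt_of_le_of_lt hx.2 hβb⟩
    obtain ⟨hint, hval⟩ := ftc_open (H := G ∘ F₀) (h := fun u => g (F₀ u) * f₀ u) hβ.1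
      (fun x hx => (hdG (F₀ x) (hF₀pos x (hsub hx))).comp x (hderiv x (hsub hx)))
      ((hgc.comp (hF₀cont.mono hsub) (fun x hx => hF₀pos x (hsub hx))).mul
        (hf₀cont.mono hsub))
      (fun x hx => mul_nonneg
        (hgpos _ (hF₀pos x (hsub hx))
          (hmonoLe x β (hsub hx) ⟨hβ.1, hβb⟩ hx.2))
        (hf₀pos x (hsub hx)).le)
      (hGlim.comp hFtend)
    refine ⟨hint, ?_⟩
    rw [hval]
    simp
  -- proper FTC composed with F₀, on closed subintervals of (a,b)
  have ftcP : ∀ (G g : ℝ → ℝ) (s t : ℝ), a < s → s ≤ t → t < b →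
      (∀ x : ℝ, 0 < x → HasDerivAt G (g x) x) →
      ContinuousOn g (Ioi 0) →
      ∫ v in s..t, g (F₀ v) * f₀ v = G (F₀ t) - G (F₀ s) := by
    intro G g s t hs hst htb hdG hgc
    have hsub : uIcc s t ⊆ Ioo a b := by
      rw [uIcc_of_le hst]
      exact fun x hx => ⟨lt_of_lt_of_le hs hx.1, lt_of_le_of_lt hx.2 htb⟩
    refine intervalIntegral.integral_eq_sub_of_hasDerivAt
      (fun x hx => (hdG (F₀ x) (hF₀pos x (hsub hx))).comp x (hderiv x (hsub hx))) ?_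
    exact ((hgc.comp (hF₀cont.mono hsub) (fun x hx => hF₀pos x (hsub hx))).mul
      (hf₀cont.mono hsub)).intervalIntegrable
  -- the outer integrand as a function of x = F₀ u
  set gOut : ℝ → ℝ := fun x =>
    θ₁ * x ^ (θ₁ + θ₂ - 1) + θ₁' * θ₂ * (x ^ (θ₁' - 1) * (Aad c T - Aad c x)) with hgOut
  set GOut : ℝ → ℝ := fun x =>
    θ₁ * Aad (θ₁ + θ₂) x + θ₁' * θ₂ * (Aad c T * Aad θ₁' x - Cad c θ₁' x) with hGOut
  -- inner integral computation
  have inner : ∀ u ∈ Ioc a y,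
      (∫ v in a..y, dprh a b F₀ f₀ θ₁ θ₂ θ₁' θ₂' u v) = gOut (F₀ u) * f₀ u := by
    intro u hu
    have hu' : u ∈ Ioo a b := ⟨hu.1, lt_of_le_of_lt hu.2 hyb⟩
    have hFu := hF₀pos u hu'
    set K₁ : ℝ := θ₁ * θ₂' * f₀ u * F₀ u ^ (θ₁ + θ₂ - θ₂' - 1) with hK₁
    set K₂ : ℝ := θ₁' * θ₂ * f₀ u * F₀ u ^ (θ₁' - 1) with hK₂
    have e₁ : ∀ v ∈ Ioo a u, dprh a b F₀ f₀ θ₁ θ₂ θ₁' θ₂' u v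
        = K₁ * (F₀ v ^ (θ₂' - 1) * f₀ v) := by
      intro v hv
      simp only [dprh]
      rw [if_neg (by rintro ⟨_, h2, _⟩; exact absurd hv.2 (not_lt.mpr h2.le)),
        if_pos ⟨hv.1, hv.2, hu'.2⟩, hK₁]
      ring
    have m₁ := main (Aad θ₂') (fun x => x ^ (θ₂' - 1)) u hu
      (fun x hx => hasDerivAt_Aad hx)
      (continuousOn_rpow_sub _)
      (fun x hx _ => Real.rpow_nonneg hx.le _)
      (tendsto_Aad_zero hθ₂')
    have e₂ : ∀ v ∈ Ioo u y, dprh a b F₀ f₀ θ₁ θ₂ θ₁' θ₂' u v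
        = K₂ * (F₀ v ^ (c - 1) * f₀ v) := by
      intro v hv
      simp only [dprh]
      rw [if_pos ⟨hu.1, hv.1, lt_trans hv.2 hyb⟩, hK₂, hc]
      ring
    have int₁ : IntervalIntegrable (dprh a b F₀ f₀ θ₁ θ₂ θ₁' θ₂' u) volume a u := by
      rw [intervalIntegrable_iff_integrableOn_Ioc_of_le hu.1.le,
        integrableOn_Ioc_iff_integrableOn_Ioo]
      have hK : IntegrableOn (fun v => K₁ * (F₀ v ^ (θ₂' - 1) * f₀ v)) (Ioc a u) :=
        m₁.1.const_mul K₁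
      exact (hK.mono_set Ioo_subset_Ioc_self).congr_fun
        (fun v hv => (e₁ v hv).symm) measurableSet_Ioo
    have int₂ : IntervalIntegrable (dprh a b F₀ f₀ θ₁ θ₂ θ₁' θ₂' u) volume u y := by
      rw [intervalIntegrable_iff_integrableOn_Ioc_of_le hu.2,
        integrableOn_Ioc_iff_integrableOn_Ioo]
      have hsub2 : Icc u y ⊆ Ioo a b := fun x hx =>
        ⟨lt_of_lt_of_le hu.1 hx.1, lt_of_le_of_lt hx.2 hyb⟩
      have hcont2 : ContinuousOn (fun v => K₂ * (F₀ v ^ (c - 1) * f₀ v)) (Icc u y) :=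
        continuousOn_const.mul (((continuousOn_rpow_sub (c-1)).comp (hF₀cont.mono hsub2)
          (fun x hx => hF₀pos x (hsub2 hx))).mul (hf₀cont.mono hsub2))
      exact (hcont2.integrableOn_Icc.mono_set Ioo_subset_Icc_self).congr_fun
        (fun v hv => (e₂ v hv).symm) measurableSet_Ioo
    have hJ₁ : ∫ v in a..u, dprh a b F₀ f₀ θ₁ θ₂ θ₁' θ₂' u v
        = K₁ * (F₀ u ^ θ₂' / θ₂') := by
      rw [intervalIntegral.integral_of_le hu.1.le, integral_Ioc_eq_integral_Ioo,
        setIntegral_congr_fun measurableSet_Ioo e₁, integral_const_mul,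
        ← integral_Ioc_eq_integral_Ioo, m₁.2]
      congr 1
      simp [Aad, hθ₂'.ne']
    have hJ₂ : ∫ v in u..y, dprh a b F₀ f₀ θ₁ θ₂ θ₁' θ₂' u v
        = K₂ * (Aad c T - Aad c (F₀ u)) := by
      rw [intervalIntegral.integral_of_le hu.2, integral_Ioc_eq_integral_Ioo,
        setIntegral_congr_fun measurableSet_Ioo e₂, integral_const_mul,
        ← integral_Ioc_eq_integral_Ioo, ← intervalIntegral.integral_of_le hu.2,
        ftcP (Aad c) (fun x => x ^ (c - 1)) u y hu.1 hu.2 hyb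
          (fun x hx => hasDerivAt_Aad hx) (continuousOn_rpow_sub _)]
    rw [← intervalIntegral.integral_add_adjacent_intervals int₁ int₂, hJ₁, hJ₂]
    have hpow : F₀ u ^ (θ₁ + θ₂ - θ₂' - 1) * F₀ u ^ θ₂' = F₀ u ^ (θ₁ + θ₂ - 1) := by
      rw [← Real.rpow_add hFu]; ring_nf
    rw [hgOut, hK₁, hK₂]
    dsimp only
    have hinv : θ₂' * θ₂'⁻¹ = 1 := mul_inv_cancel₀ hθ₂'.ne'
    linear_combination (θ₁ * f₀ u) * hpow
      + (θ₁ * f₀ u * F₀ u ^ (θ₁ + θ₂ - θ₂' - 1) * F₀ u ^ θ₂') * hinv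
  -- derivative of GOut
  have hdGOut : ∀ x : ℝ, 0 < x → HasDerivAt GOut (gOut x) x := by
    intro x hx
    have h1 := (hasDerivAt_Aad (c := θ₁ + θ₂) hx).const_mul θ₁
    have h2 := (hasDerivAt_Aad (c := θ₁') hx).const_mul (Aad c T)
    have h3 := hasDerivAt_Cad (c := c) hθ₁' hθc hx
    have h4 := (h2.sub h3).const_mul (θ₁' * θ₂)
    have h5 := h1.add h4
    rw [hGOut, hgOut]
    convert h5 using 1
    · rfl
    · rfl
    · rfl
    ring
  have hcGOut : ContinuousOn gOut (Ioi 0) := by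
    rw [hgOut]
    refine ContinuousOn.add ?_ ?_
    · exact continuousOn_const.mul (continuousOn_rpow_sub _)
    · exact continuousOn_const.mul ((continuousOn_rpow_sub _).mul
        (continuousOn_const.sub (continuousOn_Aad c)))
  have hposGOut : ∀ x : ℝ, 0 < x → x ≤ T → 0 ≤ gOut x := by
    intro x hx hxT
    rw [hgOut]
    dsimp only
    have t1 : 0 ≤ θ₁ * x ^ (θ₁ + θ₂ - 1) := mul_nonneg hθ₁.le (Real.rpow_nonneg hx.le _)
    have t2 : 0 ≤ Aad c T - Aad c x := sub_nonneg.mpr (Aad_mono hx hxT)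
    have t3 : 0 ≤ θ₁' * θ₂ * (x ^ (θ₁' - 1) * (Aad c T - Aad c x)) :=
      mul_nonneg (mul_nonneg hθ₁'.le hθ₂.le) (mul_nonneg (Real.rpow_nonneg hx.le _) t2)
    linarith
  have hlimGOut : Filter.Tendsto GOut (nhdsWithin 0 (Ioi 0)) (nhds 0) := by
    rw [hGOut]
    have h1 := (tendsto_Aad_zero hS).const_mul θ₁
    have h2 := (tendsto_Aad_zero hθ₁').const_mul (Aad c T)
    have h3 := tendsto_Cad_zero hθ₁' hθc
    have h4 := ((h2.sub h3).const_mul (θ₁' * θ₂))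
    have := h1.add h4
    simpa using this
  have mo := main GOut gOut y ⟨hay, le_rfl⟩ hdGOut hcGOut hposGOut hlimGOut
  rw [intervalIntegral.integral_of_le hay.le,
    setIntegral_congr_fun measurableSet_Ioc inner, mo.2]
  -- final algebra: GOut T = T ^ (θ₁ + θ₂)
  have hT0 : 0 < T := hF₀pos y hy
  rw [hGOut]
  dsimp only
  rcases eq_or_ne c 0 with hc0 | hc0
  · have hθ₁'S : θ₁' = θ₁ + θ₂ := by rw [hc] at hc0; linarith
    rw [hc0]
    simp only [Aad, Cad, if_pos rfl, ↓reduceIte, if_neg hS.ne', if_neg hθ₁'.ne']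
    rw [hθ₁'S]
    field_simp
    ring
  · have hcS : θ₁' + c = θ₁ + θ₂ := by rw [hc]; ring
    have hc0' : θ₁ + θ₂ - θ₁' ≠ 0 := by rw [hc] at hc0; exact hc0
    simp only [Aad, Cad, if_neg hc0, if_neg hθ₁'.ne', if_neg hS.ne', hcS]
    have hpow : T ^ c * T ^ θ₁' = T ^ (θ₁ + θ₂) := by
      rw [← Real.rpow_add hT0]; congr 1; rw [hc]; ring
    rw [div_mul_div_comm, hpow, hc]
    field_simp
    ring
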